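/- Let e : ℕ → ℝ be a sequence with e(1) ≠ 0 and e(n) ≥ 0 for all but finitely many n, such that the Dirichlet series D(s) = Σ_{n≥1} e(n) n^{-s} has finite abscissa of convergence. Suppose further that for some integer k ≥ 2 the function (2π)^{-2s} Γ(s) Γ(s − k + 2) D(s) extends to an entire function of s. Then we reach a contradiction; i.e., no such sequence exists. -/

import Mathlib

open Complex Filter LSeries

open scoped ComplexOrder

set_option maxHeartbeats 1000000

private lemma logMul_iterate (f : ℕ → ℂ) (n m : ℕ) :
    (logMul^[n] f) m = (Complex.log m) ^ n * f m := by
  induction n generalizing f with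
  | zero => simp
  | succ n ih =>
    rw [Function.iterate_succ_apply, ih (logMul f), logMul, pow_succ]
    ring

private lemma landau_summable {f : ℕ → ℂ} (hf0 : 0 ≤ f) {x : ℝ}
    (hx : LSeries.abscissaOfAbsConv f ≤ (x : EReal)) {F : ℂ → ℂ} (hF : Differentiable ℂ F)
    (hFeq : Set.EqOn F (LSeries f) {s | x < s.re}) (y : ℝ) :
    LSeriesSummable f (y : ℂ) := by
  have ha : ∀ m, 0 ≤ (f m).re := fun m => by
    simpa using (Complex.le_def.mp (hf0 m)).1
  have hfa : ∀ m, f m = ((f m).re : ℂ) := fun m =>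
    Complex.eq_re_of_ofReal_le (by exact_mod_cast hf0 m)
  set a : ℕ → ℝ := fun m => (f m).re with ha_def
  -- the real form of the terms
  set u : ℝ → ℕ → ℕ → ℝ := fun σ n m =>
    if m = 0 then 0 else (Real.log m) ^ n * a m * (m : ℝ) ^ (-σ) with hu_def
  have hterm : ∀ (σ : ℝ) (n m : ℕ),
      term (logMul^[n] f) (σ : ℂ) m = ((u σ n m : ℝ) : ℂ) := by
    intro σ n m
    rcases eq_or_ne m 0 with rfl | hm
    · simp [hu_def]
    · rw [term_of_ne_zero hm, logMul_iterate, hfa m, hu_def]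
      simp only [hm, if_false]
      rw [← natCast_log, ← ofReal_natCast m,
        ← ofReal_cpow (by positivity : (0:ℝ) ≤ (m:ℝ))]
      rw [Real.rpow_neg (by positivity)]
      push_cast
      rw [div_eq_mul_inv]
  have hu0 : ∀ σ n m, 0 ≤ u σ n m := by
    intro σ n m
    rcases eq_or_ne m 0 with rfl | hm
    · simp [hu_def]
    · simp only [hu_def, hm, if_false]
      exact mul_nonneg (mul_nonneg (pow_nonneg (Real.log_natCast_nonneg m) n) (ha m))
        (Real.rpow_nonneg (by positivity) _)
  by_cases hy : x < y
  · refine LSeriesSummable_of_abscissaOfAbsConv_lt_re ?_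
    simpa using lt_of_le_of_lt hx (by exact_mod_cast hy)
  push_neg at hy
  set c : ℝ := x + 1 with hc_def
  have hc : LSeries.abscissaOfAbsConv f < ((c : ℂ)).re := by
    simp only [ofReal_re]
    exact lt_of_le_of_lt hx (by exact_mod_cast (lt_add_one x))
  have hcy : 0 ≤ c - y := by simp only [hc_def]; linarith
  -- summability of each log-twisted series at c
  have hsum : ∀ n : ℕ, Summable (u c n) := by
    intro n
    have : LSeriesSummable (logMul^[n] f) (c : ℂ) := by
      refine LSeriesSummable_of_abscissaOfAbsConv_lt_re ?_
      rwa [absicssaOfAbsConv_logPowMul]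
    rw [LSeriesSummable] at this
    rw [funext (hterm c n)] at this
    exact Complex.summable_ofReal.mp this
  set D : ℕ → ℝ := fun n => ∑' m, u c n m with hD_def
  have hLS : ∀ n : ℕ, LSeries (logMul^[n] f) (c : ℂ) = ((D n : ℝ) : ℂ) := by
    intro n
    rw [LSeries, funext (hterm c n), hD_def]
    exact (Complex.hasSum_ofReal.mpr (hsum n).hasSum).tsum_eq
  -- Taylor expansion of F at c, evaluated at y
  have hopen : IsOpen {s : ℂ | x < s.re} := isOpen_lt continuous_const Complex.continuous_re
  have hcmem : (c : ℂ) ∈ {s : ℂ | x < s.re} := by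
    simp only [Set.mem_setOf_eq, ofReal_re, hc_def]; linarith
  have hTay := Complex.hasSum_taylorSeries_of_entire hF (c : ℂ) (y : ℂ)
  have hTay' : HasSum (fun n : ℕ => (((n.factorial : ℝ)⁻¹ * (c - y) ^ n * D n : ℝ) : ℂ)) (F y) := by
    refine hTay.congr_fun fun n => ?_
    rw [hFeq.iteratedDeriv_of_isOpen hopen n hcmem, LSeries_iteratedDeriv n hc, hLS n]
    rw [smul_eq_mul, smul_eq_mul]
    push_cast
    rw [show ((y : ℂ) - c) ^ n * ((-1) ^ n * (D n : ℂ)) = (((-1) * ((y:ℂ) - c)) ^ n) * D n by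
      rw [mul_pow]; ring]
    ring_nf
  have hT : Summable (fun n : ℕ => (n.factorial : ℝ)⁻¹ * (c - y) ^ n * D n) :=
    Complex.summable_ofReal.mp hTay'.summable
  -- the double series
  set P : ℕ × ℕ → ℝ := fun p => (p.1.factorial : ℝ)⁻¹ * (c - y) ^ p.1 * u c p.1 p.2 with hP_def
  have hP0 : 0 ≤ P := by
    intro p
    have := hu0 c p.1 p.2
    have h1 : (0:ℝ) ≤ (c - y) ^ p.1 := pow_nonneg hcy _
    positivity
  have hP : Summable P := by
    refine (summable_prod_of_nonneg hP0).mpr ⟨fun n => ?_, ?_⟩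
    · simp only [hP_def]
      exact (hsum n).mul_left _
    · refine hT.congr fun n => ?_
      rw [hP_def]
      exact (tsum_mul_left).symm
  have hPswap : Summable fun q : ℕ × ℕ => P (q.2, q.1) :=
    ((Equiv.prodComm ℕ ℕ).summable_iff).mpr hP
  have hS : Summable fun m => ∑' n, P (n, m) :=
    ((summable_prod_of_nonneg (f := fun q : ℕ × ℕ => P (q.2, q.1)) (fun q => hP0 (q.2, q.1))).mp
      hPswap).2
  -- compute the inner sums
  have hinner : ∀ m : ℕ, (∑' n, P (n, m)) = u y 0 m := by
    intro m
    rcases eq_or_ne m 0 with rfl | hm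
    · simp [hP_def, hu_def]
    · have hm0 : (0:ℝ) < (m : ℝ) := by positivity
      have h1 : ∀ n : ℕ, P (n, m) =
          (((c - y) * Real.log m) ^ n / n.factorial) * (a m * (m : ℝ) ^ (-c)) := by
        intro n
        simp only [hP_def, hu_def, hm, if_false]
        rw [mul_pow]
        field_simp
      rw [tsum_congr h1, tsum_mul_right]
      have hexp : (∑' n : ℕ, ((c - y) * Real.log m) ^ n / n.factorial)
          = Real.exp ((c - y) * Real.log m) := by
        rw [Real.exp_eq_exp_ℝ, NormedSpace.exp_eq_tsum_div]
      rw [hexp]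
      have : Real.exp ((c - y) * Real.log m) = (m : ℝ) ^ (c - y) := by
        rw [Real.rpow_def_of_pos hm0, mul_comm]
      rw [this, hu_def]
      simp only [hm, if_false, pow_zero, one_mul]
      rw [← mul_assoc, mul_comm ((m:ℝ) ^ (c - y)) (a m), mul_assoc,
        ← Real.rpow_add hm0]
      ring_nf
  have hv : Summable (u y 0) := hS.congr hinner
  rw [LSeriesSummable]
  have : term f (y : ℂ) = fun m => ((u y 0 m : ℝ) : ℂ) := by
    funext m
    have := hterm y 0 m
    rwa [Function.iterate_zero, id_eq] at this
  rw [this]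
  exact Complex.summable_ofReal.mpr hv

/-- Core analytic step of the Kohnen–Sengupta method: there is no real sequence `e` with
`e 1 ≠ 0`, `e n ≥ 0` for all but finitely many `n`, whose Dirichlet series
`D(s) = ∑_{n≥1} e(n) n^{-s}` has finite abscissa of convergence `σc` and is such that
`(2π)^{-2s} Γ(s) Γ(s - k + 2) D(s)` (for some integer `k ≥ 2`) extends to an entire
function of `s`. -/
theorem no_such_sequence (e : ℕ → ℝ) (σc : ℝ) (k : ℤ) (hk : 2 ≤ k)
    (he1 : e 1 ≠ 0)
    (hnn : ∀ᶠ n in atTop, 0 ≤ e n)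
    (hconv : ∀ s : ℂ, σc < s.re → LSeriesSummable (fun n => (e n : ℂ)) s)
    (hdiv : ∀ σ : ℝ, σ < σc → ¬ LSeriesSummable (fun n => (e n : ℂ)) (σ : ℂ))
    (G : ℂ → ℂ) (hG : Differentiable ℂ G)
    (hGeq : ∀ s : ℂ, σc < s.re →
      G s = (2 * Real.pi : ℂ) ^ (-2 * s) * Complex.Gamma s * Complex.Gamma (s - k + 2) *
        LSeries (fun n => (e n : ℂ)) s) :
    False := by
  obtain ⟨N₀, hN₀⟩ := eventually_atTop.mp hnn
  set N : ℕ := max N₀ 1 with hN_def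
  set f : ℕ → ℂ := fun n => if N ≤ n then (e n : ℂ) else 0 with hf_def
  set g : ℕ → ℂ := fun n => (e n : ℂ) - f n with hg_def
  have hf0 : 0 ≤ f := by
    intro n
    simp only [hf_def]
    split
    · next h =>
      have : 0 ≤ e n := hN₀ n (le_trans (le_max_left _ _) h)
      simpa using this
    · exact le_refl 0
  have hfe : f =ᶠ[atTop] fun n => (e n : ℂ) :=
    eventually_atTop.mpr ⟨N, fun n hn => by simp [hf_def, hn]⟩
  have habs_e : LSeries.abscissaOfAbsConv (fun n => (e n : ℂ)) ≤ (σc : EReal) :=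
    LSeries.abscissaOfAbsConv_le_of_forall_lt_LSeriesSummable fun y hy =>
      hconv y (by simpa using hy)
  have habs_f : LSeries.abscissaOfAbsConv f ≤ (σc : EReal) := by
    rw [LSeries.abscissaOfAbsConv_congr' hfe]
    exact habs_e
  have hgzero : ∀ n, N ≤ n → g n = 0 := fun n hn => by simp [hg_def, hf_def, hn]
  have hgterm : ∀ (s : ℂ) (n : ℕ), n ∉ Finset.range N → term g s n = 0 := by
    intro s n hn
    rcases eq_or_ne n 0 with rfl | h0
    · exact term_zero ..
    · rw [term_of_ne_zero h0, hgzero n (by simpa using hn), zero_div]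
  have hgsum : ∀ s : ℂ, LSeriesSummable g s := fun s =>
    summable_of_ne_finset_zero (hgterm s)
  have hQeq : LSeries g = fun s => ∑ n ∈ Finset.range N, term g s n :=
    funext fun s => tsum_eq_sum (hgterm s)
  have hQdiff : Differentiable ℂ (LSeries g) := by
    rw [hQeq]
    apply Differentiable.fun_sum
    intro n hn
    rcases eq_or_ne n 0 with rfl | h0
    · simpa only [term_zero] using differentiable_const (0 : ℂ)
    · have : (fun s => term g s n) = fun s => g n / (n : ℂ) ^ s :=
        funext fun s => term_of_ne_zero h0 g s
      rw [this]
      refine (differentiable_const _).div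
        (differentiable_id.const_cpow (Or.inl (Nat.cast_ne_zero.mpr h0))) fun s hs => ?_
      exact (Nat.cast_ne_zero.mpr h0) ((Complex.cpow_eq_zero_iff _ _).mp hs).1
  have h2pi : (2 * Real.pi : ℂ) ≠ 0 := by
    simp [Real.pi_ne_zero]
  set H : ℂ → ℂ := fun s => G s * (2 * Real.pi : ℂ) ^ (2 * s) * (Complex.Gamma s)⁻¹ *
    (Complex.Gamma (s - k + 2))⁻¹ - LSeries g s with hH_def
  have hH : Differentiable ℂ H := by
    refine Differentiable.sub ?_ hQdiff
    refine Differentiable.mul (Differentiable.mul (hG.mul ?_)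
      Complex.differentiable_one_div_Gamma) ?_
    · exact (differentiable_id.const_mul 2).const_cpow (Or.inl h2pi)
    · exact Complex.differentiable_one_div_Gamma.comp
        ((differentiable_id.sub_const _).add_const _)
  set x : ℝ := max σc (|(k : ℝ)| + 1) with hx_def
  have hEq : Set.EqOn H (LSeries f) {s | x < s.re} := by
    intro s hs
    simp only [Set.mem_setOf_eq] at hs
    have hs1 : σc < s.re := lt_of_le_of_lt (le_max_left _ _) hs
    have hsk : |(k : ℝ)| + 1 < s.re := lt_of_le_of_lt (le_max_right _ _) hs
    have hks := le_abs_self (k : ℝ)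
    have hks' := neg_abs_le (k : ℝ)
    have hΓ1 : Complex.Gamma s ≠ 0 :=
      Complex.Gamma_ne_zero_of_re_pos (by linarith [abs_nonneg (k : ℝ)])
    have hre2 : (s - k + 2).re = s.re - k + 2 := by
      simp [Complex.sub_re, Complex.add_re]
    have hΓ2 : Complex.Gamma (s - k + 2) ≠ 0 :=
      Complex.Gamma_ne_zero_of_re_pos (by rw [hre2]; linarith)
    have hsf : LSeries f s = LSeries (fun n => (e n : ℂ)) s - LSeries g s := by
      have hfg : f = (fun n => (e n : ℂ)) - g := by
        funext n; simp [hg_def]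
      rw [hfg, LSeries_sub (hconv s hs1) (hgsum s)]
    have hpne : (2 * Real.pi : ℂ) ^ (2 * s) ≠ 0 := fun h => h2pi ((Complex.cpow_eq_zero_iff _ _).mp h).1
    have hpow : (2 * Real.pi : ℂ) ^ (-2 * s) = ((2 * Real.pi : ℂ) ^ (2 * s))⁻¹ := by
      rw [show (-2 : ℂ) * s = -(2 * s) by ring, Complex.cpow_neg]
    rw [hH_def]
    simp only
    rw [hGeq s hs1, hsf, hpow]
    field_simp
  have hxE : LSeries.abscissaOfAbsConv f ≤ (x : EReal) :=
    habs_f.trans (EReal.coe_le_coe_iff.mpr (hx_def ▸ le_max_left σc (|(k : ℝ)| + 1)))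
  have hsumf := landau_summable hf0 hxE hH hEq (σc - 1)
  have hsume : LSeriesSummable (fun n => (e n : ℂ)) ((σc - 1 : ℝ) : ℂ) :=
    hsumf.congr' _ hfe
  exact hdiv (σc - 1) (by linarith) hsume
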